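/- Fix an integer d ≥ 1 and let β > 1/2. There exists a constant C > 0 depending only on β such that: if A, B : E × E → ℂ are infinite matrices with |A|_β < ∞ and |B|_{β+} < ∞, then the products AB and BA, defined by (AB)_a^c = Σ_{b∈E} A_a^b B_b^c and (BA)_a^c = Σ_{b∈E} B_a^b A_b^c (these series converge absolutely), satisfy |AB|_β ≤ C·|A|_β·|B|_{β+} and |BA|_β ≤ C·|A|_β·|B|_{β+}. -/

import Mathlib

open scoped Classical

/-- `hermiteDim d j` is the number of `d`-tuples of odd natural numbers summing to `j`,
i.e. the multiplicity `d_j` of the eigenvalue `j` of the `d`-dimensional harmonic oscillator. -/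
noncomputable def hermiteDim (d j : ℕ) : ℕ :=
  ((Finset.univ : Finset (Fin d → Fin (j + 1))).filter
    (fun f => (∀ i, Odd ((f i : ℕ))) ∧ ∑ i, ((f i : ℕ)) = j)).card

/-- The index set `E = {(j, l) : j ∈ Ê, 1 ≤ l ≤ d_j}`, encoded as pairs `⟨k, l⟩` where
`j = d + 2k` runs over `Ê = {d, d+2, …}` and `l` runs over a set of cardinality `d_j`. -/
abbrev IndexE (d : ℕ) : Type := Σ k : ℕ, Fin (hermiteDim d (d + 2 * k))

/-- The eigenvalue `w_a` attached to `a ∈ E`. -/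
def wE (d : ℕ) (a : IndexE d) : ℕ := d + 2 * a.1

/-- The operator norm of the block `A_{[j]}^{[j']}`, `j = d + 2k`, `j' = d + 2k'`, of an
infinite matrix `A : E × E → ℂ`, as a linear map between the corresponding Euclidean spaces. -/
noncomputable def blockNorm (d : ℕ) (A : IndexE d → IndexE d → ℂ) (k k' : ℕ) : ℝ :=
  ‖LinearMap.toContinuousLinearMap (Matrix.toEuclideanLin
      (Matrix.of fun (i : Fin (hermiteDim d (d + 2 * k)))
        (i' : Fin (hermiteDim d (d + 2 * k'))) => A ⟨k, i⟩ ⟨k', i'⟩))‖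

/-- The weight `(1 + ln j)^β (1 + ln j')^β` with `j = d + 2k`, `j' = d + 2k'`. -/
noncomputable def wtBeta (d : ℕ) (β : ℝ) (k k' : ℕ) : ℝ :=
  (1 + Real.log ((d : ℝ) + 2 * k)) ^ β * (1 + Real.log ((d : ℝ) + 2 * k')) ^ β

/-- The weight `(1 + |j - j'|)(1 + ln j)^β (1 + ln j')^β` with `j = d + 2k`, `j' = d + 2k'`. -/
noncomputable def wtBetaPlus (d : ℕ) (β : ℝ) (k k' : ℕ) : ℝ :=
  (1 + |((d : ℝ) + 2 * k) - ((d : ℝ) + 2 * k')|) * wtBeta d β k k'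

/-! ### Auxiliary block-matrix lemmas -/

/-- The block `A_{[k]}^{[k']}` as a continuous linear map. -/
noncomputable def blkT (d : ℕ) (A : IndexE d → IndexE d → ℂ) (k k' : ℕ) :
    EuclideanSpace ℂ (Fin (hermiteDim d (d + 2 * k'))) →L[ℂ]
      EuclideanSpace ℂ (Fin (hermiteDim d (d + 2 * k))) :=
  LinearMap.toContinuousLinearMap (Matrix.toEuclideanLin
      (Matrix.of fun i i' => A ⟨k, i⟩ ⟨k', i'⟩))

lemma blockNorm_eq (d : ℕ) (A : IndexE d → IndexE d → ℂ) (k k' : ℕ) :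
    blockNorm d A k k' = ‖blkT d A k k'‖ := rfl

lemma blockNorm_nonneg (d : ℕ) (A : IndexE d → IndexE d → ℂ) (k k' : ℕ) :
    0 ≤ blockNorm d A k k' := by rw [blockNorm_eq]; exact norm_nonneg _

lemma blkT_apply (d : ℕ) (A : IndexE d → IndexE d → ℂ) (k k' : ℕ)
    (x : EuclideanSpace ℂ (Fin (hermiteDim d (d + 2 * k')))) (i : Fin (hermiteDim d (d + 2 * k))) :
    blkT d A k k' x i = ∑ i', A ⟨k, i⟩ ⟨k', i'⟩ * x i' := rfl

lemma coord_le {N : ℕ} (v : EuclideanSpace ℂ (Fin N)) (i : Fin N) : ‖v i‖ ≤ ‖v‖ := by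
  rw [EuclideanSpace.norm_eq]
  have : ‖v i‖ = Real.sqrt (‖v i‖ ^ 2) := by rw [Real.sqrt_sq (norm_nonneg _)]
  rw [this]
  apply Real.sqrt_le_sqrt
  exact Finset.single_le_sum (f := fun j => ‖v j‖ ^ 2) (fun j _ => sq_nonneg _) (Finset.mem_univ i)

/-- column square-sum bound -/
lemma colSq (d : ℕ) (B : IndexE d → IndexE d → ℂ) (n k' : ℕ)
    (i' : Fin (hermiteDim d (d + 2 * k'))) :
    ∑ i'', ‖B ⟨n, i''⟩ ⟨k', i'⟩‖ ^ 2 ≤ (blockNorm d B n k') ^ 2 := by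
  have hv : ∀ i'', blkT d B n k' (EuclideanSpace.single i' (1:ℂ)) i'' = B ⟨n, i''⟩ ⟨k', i'⟩ := by
    intro i''
    rw [blkT_apply]
    simp [EuclideanSpace.single_apply]
  have h1 : ∑ i'', ‖B ⟨n, i''⟩ ⟨k', i'⟩‖ ^ 2
      = ‖blkT d B n k' (EuclideanSpace.single i' (1:ℂ))‖ ^ 2 := by
    rw [EuclideanSpace.norm_eq, Real.sq_sqrt (by positivity)]
    exact Finset.sum_congr rfl fun i'' _ => by rw [hv i'']
  rw [h1, blockNorm_eq]
  have h2 : ‖blkT d B n k' (EuclideanSpace.single i' (1:ℂ))‖ ≤ ‖blkT d B n k'‖ := by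
    calc ‖blkT d B n k' (EuclideanSpace.single i' (1:ℂ))‖
        ≤ ‖blkT d B n k'‖ * ‖EuclideanSpace.single i' (1:ℂ)‖ :=
          ContinuousLinearMap.le_opNorm _ _
      _ = ‖blkT d B n k'‖ := by rw [EuclideanSpace.norm_single]; simp
  exact pow_le_pow_left₀ (norm_nonneg _) h2 2

/-- row square-sum bound -/
lemma rowSq (d : ℕ) (A : IndexE d → IndexE d → ℂ) (k n : ℕ)
    (i : Fin (hermiteDim d (d + 2 * k))) :
    ∑ i'', ‖A ⟨k, i⟩ ⟨n, i''⟩‖ ^ 2 ≤ (blockNorm d A k n) ^ 2 := by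
  set R2 : ℝ := ∑ i'', ‖A ⟨k, i⟩ ⟨n, i''⟩‖ ^ 2 with hR2
  have hR2nn : 0 ≤ R2 := by positivity
  set x : EuclideanSpace ℂ (Fin (hermiteDim d (d + 2 * n))) :=
    (WithLp.equiv 2 _).symm (fun i'' => (starRingEnd ℂ) (A ⟨k, i⟩ ⟨n, i''⟩)) with hx
  have hxnorm : ‖x‖ = Real.sqrt R2 := by
    rw [EuclideanSpace.norm_eq]
    congr 1
    exact Finset.sum_congr rfl fun i'' _ => by
      simp only [hx, WithLp.equiv_symm_apply, PiLp.toLp_apply, RCLike.norm_conj]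
  have happ : blkT d A k n x i = (R2 : ℂ) := by
    rw [blkT_apply]
    have : ∀ i'', A ⟨k, i⟩ ⟨n, i''⟩ * x i'' = ((‖A ⟨k, i⟩ ⟨n, i''⟩‖ ^ 2 : ℝ) : ℂ) := by
      intro i''
      simp only [hx, WithLp.equiv_symm_apply, PiLp.toLp_apply]
      rw [Complex.mul_conj]
      norm_cast
      rw [Complex.normSq_eq_norm_sq]
    rw [Finset.sum_congr rfl fun i'' _ => this i'', hR2]
    norm_cast
  have hle : R2 ≤ blockNorm d A k n * Real.sqrt R2 := by
    calc R2 = ‖((R2 : ℝ) : ℂ)‖ := by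
          rw [Complex.norm_real, Real.norm_eq_abs, abs_of_nonneg hR2nn]
      _ = ‖blkT d A k n x i‖ := by rw [happ]
      _ ≤ ‖blkT d A k n x‖ := coord_le _ _
      _ ≤ ‖blkT d A k n‖ * ‖x‖ := ContinuousLinearMap.le_opNorm _ _
      _ = blockNorm d A k n * Real.sqrt R2 := by rw [blockNorm_eq, hxnorm]
  have hsq : Real.sqrt R2 ≤ blockNorm d A k n := by
    rcases eq_or_lt_of_le (Real.sqrt_nonneg R2) with h0 | h0
    · rw [← h0]; exact blockNorm_nonneg _ _ _ _
    · have : Real.sqrt R2 * Real.sqrt R2 ≤ blockNorm d A k n * Real.sqrt R2 := by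
        rw [Real.mul_self_sqrt hR2nn]; exact hle
      exact le_of_mul_le_mul_right this h0
  calc R2 = Real.sqrt R2 ^ 2 := by rw [Real.sq_sqrt hR2nn]
    _ ≤ (blockNorm d A k n) ^ 2 := pow_le_pow_left₀ (Real.sqrt_nonneg _) hsq 2

/-- Cauchy–Schwarz fiber bound. -/
lemma fiber_bound (d : ℕ) (A B : IndexE d → IndexE d → ℂ) (k n k' : ℕ)
    (i : Fin (hermiteDim d (d + 2 * k))) (i' : Fin (hermiteDim d (d + 2 * k'))) :
    ∑ i'', ‖A ⟨k, i⟩ ⟨n, i''⟩ * B ⟨n, i''⟩ ⟨k', i'⟩‖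
      ≤ blockNorm d A k n * blockNorm d B n k' := by
  have hcs : (∑ i'', ‖A ⟨k, i⟩ ⟨n, i''⟩‖ * ‖B ⟨n, i''⟩ ⟨k', i'⟩‖) ^ 2
      ≤ (∑ i'', ‖A ⟨k, i⟩ ⟨n, i''⟩‖ ^ 2) * ∑ i'', ‖B ⟨n, i''⟩ ⟨k', i'⟩‖ ^ 2 :=
    Finset.sum_mul_sq_le_sq_mul_sq _ _ _
  have h2 : (∑ i'', ‖A ⟨k, i⟩ ⟨n, i''⟩‖ * ‖B ⟨n, i''⟩ ⟨k', i'⟩‖) ^ 2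
      ≤ (blockNorm d A k n * blockNorm d B n k') ^ 2 := by
    calc (∑ i'', ‖A ⟨k, i⟩ ⟨n, i''⟩‖ * ‖B ⟨n, i''⟩ ⟨k', i'⟩‖) ^ 2
        ≤ (∑ i'', ‖A ⟨k, i⟩ ⟨n, i''⟩‖ ^ 2) * ∑ i'', ‖B ⟨n, i''⟩ ⟨k', i'⟩‖ ^ 2 := hcs
      _ ≤ (blockNorm d A k n) ^ 2 * (blockNorm d B n k') ^ 2 := by
          apply mul_le_mul (rowSq d A k n i) (colSq d B n k' i') (by positivity) (by positivity)
      _ = (blockNorm d A k n * blockNorm d B n k') ^ 2 := by ring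
  have hnn : 0 ≤ ∑ i'', ‖A ⟨k, i⟩ ⟨n, i''⟩‖ * ‖B ⟨n, i''⟩ ⟨k', i'⟩‖ := by positivity
  have hbnn : 0 ≤ blockNorm d A k n * blockNorm d B n k' :=
    mul_nonneg (blockNorm_nonneg _ _ _ _) (blockNorm_nonneg _ _ _ _)
  calc ∑ i'', ‖A ⟨k, i⟩ ⟨n, i''⟩ * B ⟨n, i''⟩ ⟨k', i'⟩‖
      = ∑ i'', ‖A ⟨k, i⟩ ⟨n, i''⟩‖ * ‖B ⟨n, i''⟩ ⟨k', i'⟩‖ :=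
        Finset.sum_congr rfl fun i'' _ => norm_mul _ _
    _ ≤ blockNorm d A k n * blockNorm d B n k' := by nlinarith [hnn, hbnn, h2]

/-! ### Analytic lemmas -/

lemma harm_le (m : ℕ) : ∑ t ∈ Finset.range m, ((1:ℝ) + t)⁻¹ ≤ 1 + Real.log m := by
  induction m with
  | zero => simp
  | succ n ih =>
    rcases Nat.eq_zero_or_pos n with hn | hn
    · subst hn; norm_num
    · rw [Finset.sum_range_succ]
      have hlog : ((1:ℝ) + n)⁻¹ ≤ Real.log (n + 1) - Real.log n := by
        have hn' : (0:ℝ) < n := by exact_mod_cast hn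
        have hx : (0:ℝ) < (n:ℝ) / (n + 1) := by positivity
        have := Real.log_le_sub_one_of_pos hx
        rw [Real.log_div (ne_of_gt hn') (by positivity)] at this
        have harith : (n:ℝ) / (n + 1) - 1 = -(1 / (n + 1)) := by field_simp; ring
        rw [harith] at this
        have : Real.log n - Real.log (n+1) ≤ -(1/(n+1)) := this
        have h1 : (1:ℝ) + n = n + 1 := by ring
        rw [h1, one_div] at *
        linarith
      have hcast : ((n:ℝ) + 1) = ((n + 1 : ℕ) : ℝ) := by push_cast; ring
      calc ∑ t ∈ Finset.range n, ((1:ℝ) + t)⁻¹ + ((1:ℝ) + n)⁻¹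
          ≤ (1 + Real.log n) + (Real.log (n + 1) - Real.log n) := add_le_add ih hlog
        _ = 1 + Real.log ((n:ℝ) + 1) := by ring
        _ = 1 + Real.log ((n + 1 : ℕ) : ℝ) := by rw [hcast]

lemma log_nat_nonneg (n : ℕ) : 0 ≤ Real.log n := by
  rcases Nat.eq_zero_or_pos n with hn | hn
  · subst hn; simp
  · exact Real.log_natCast_nonneg n

lemma bertrand_summable {p : ℝ} (hp : 1 < p) :
    Summable (fun n : ℕ => ((n : ℝ) * (1 + Real.log n) ^ p)⁻¹) := by
  have hp0 : 0 ≤ p := by linarith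
  have hnonneg : ∀ n : ℕ, 0 ≤ ((n : ℝ) * (1 + Real.log n) ^ p)⁻¹ := by
    intro n
    have := log_nat_nonneg n
    positivity
  have hmono : ∀ ⦃a b : ℕ⦄, 0 < a → a ≤ b →
      ((b : ℝ) * (1 + Real.log b) ^ p)⁻¹ ≤ ((a : ℝ) * (1 + Real.log a) ^ p)⁻¹ := by
    intro a b ha hab
    have ha' : (0:ℝ) < a := by exact_mod_cast ha
    have hab' : (a:ℝ) ≤ b := by exact_mod_cast hab
    have hla := log_nat_nonneg a
    apply inv_anti₀
    · positivity
    · apply mul_le_mul hab' ?_ (by positivity) (by positivity)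
      refine Real.rpow_le_rpow (by positivity) ?_ hp0
      have : Real.log a ≤ Real.log b := Real.log_le_log ha' hab'
      linarith
  rw [← summable_condensed_iff_of_nonneg hnonneg hmono]
  have hterm : ∀ k : ℕ, (2:ℝ) ^ k * (((2 ^ k : ℕ) : ℝ) * (1 + Real.log ((2:ℕ) ^ k : ℕ)) ^ p)⁻¹
      ≤ ((Real.log 2) ^ p)⁻¹ * (((1 + (k:ℝ)) ^ p)⁻¹) := by
    intro k
    have h2k : ((2 ^ k : ℕ) : ℝ) = (2:ℝ) ^ k := by push_cast; ring
    have hlog2 : (0:ℝ) < Real.log 2 := Real.log_pos (by norm_num)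
    have hlogle : Real.log 2 ≤ 1 := by
      have := Real.log_two_lt_d9
      linarith
    have hlogpow : Real.log (((2:ℕ) ^ k : ℕ) : ℝ) = k * Real.log 2 := by
      rw [h2k, Real.log_pow]
    have hkey : (1 + (k:ℝ)) * Real.log 2 ≤ 1 + k * Real.log 2 := by
      nlinarith [(Nat.cast_nonneg k : (0:ℝ) ≤ k)]
    have hpos1 : (0:ℝ) < (1 + (k:ℝ)) * Real.log 2 := by positivity
    have hrp : ((1 + (k:ℝ)) * Real.log 2) ^ p ≤ (1 + (k:ℝ) * Real.log 2) ^ p :=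
      Real.rpow_le_rpow hpos1.le hkey hp0
    have hmulr : ((1 + (k:ℝ)) * Real.log 2) ^ p = (1 + (k:ℝ)) ^ p * (Real.log 2) ^ p :=
      Real.mul_rpow (by positivity) hlog2.le
    rw [hmulr] at hrp
    have h2kpos : (0:ℝ) < (2:ℝ) ^ k := by positivity
    rw [hlogpow, h2k, mul_inv, ← mul_assoc, mul_inv_cancel₀ (ne_of_gt h2kpos), one_mul,
      ← mul_inv]
    apply inv_anti₀
    · positivity
    · calc (Real.log 2) ^ p * (1 + (k:ℝ)) ^ p
          = (1 + (k:ℝ)) ^ p * (Real.log 2) ^ p := by ring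
        _ ≤ (1 + (k:ℝ) * Real.log 2) ^ p := hrp
  refine Summable.of_nonneg_of_le (fun k => ?_) hterm ?_
  · have := log_nat_nonneg (2 ^ k)
    positivity
  · apply Summable.mul_left
    have hbase : Summable (fun n : ℕ => ((n : ℝ) ^ p)⁻¹) := Real.summable_nat_rpow_inv.2 hp
    have h1 := (summable_nat_add_iff 1).2 hbase
    apply h1.congr
    intro k
    congr 2
    push_cast
    ring

lemma keySum (d : ℕ) (hd : 1 ≤ d) {p : ℝ} (hp : 1 < p) :
    ∃ Cs > 0, ∀ m : ℕ,
      Summable (fun n : ℕ =>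
        ((1 + Real.log ((d:ℝ) + 2 * n)) ^ p * (1 + 2 * |(n:ℝ) - (m:ℝ)|))⁻¹) ∧
      ∑' n : ℕ, ((1 + Real.log ((d:ℝ) + 2 * n)) ^ p * (1 + 2 * |(n:ℝ) - (m:ℝ)|))⁻¹ ≤ Cs := by
  have hp0 : 0 ≤ p := by linarith
  have hd' : (1:ℝ) ≤ d := by exact_mod_cast hd
  set w : ℕ → ℝ := fun n => 1 + Real.log ((d:ℝ) + 2 * n) with hw
  have hj1 : ∀ n : ℕ, (1:ℝ) ≤ (d:ℝ) + 2 * n := by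
    intro n
    have : (0:ℝ) ≤ 2 * n := by positivity
    linarith
  have hjpos : ∀ n : ℕ, (0:ℝ) < (d:ℝ) + 2 * n := fun n => lt_of_lt_of_le one_pos (hj1 n)
  have hw1 : ∀ n, 1 ≤ w n := by
    intro n
    have := Real.log_nonneg (hj1 n)
    simp only [hw]
    linarith
  have hwpos : ∀ n, 0 < w n := fun n => lt_of_lt_of_le one_pos (hw1 n)
  have hwp1 : ∀ n, 1 ≤ w n ^ p := by
    intro n
    calc (1:ℝ) = 1 ^ p := (Real.one_rpow p).symm
      _ ≤ w n ^ p := Real.rpow_le_rpow zero_le_one (hw1 n) hp0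
  have hwppos : ∀ n, 0 < w n ^ p := fun n => lt_of_lt_of_le one_pos (hwp1 n)
  -- the summable comparison series
  set Af : ℕ → ℝ := fun n => (w n ^ p * (1 + (n:ℝ)))⁻¹ with hAf
  have hAsum : Summable Af := by
    have hshift := (summable_nat_add_iff 1).2 (bertrand_summable hp)
    apply Summable.of_nonneg_of_le
      (fun n => inv_nonneg.2 (mul_nonneg (hwppos n).le (by positivity))) (fun n => ?_) hshift
    have hcast : ((n + 1 : ℕ) : ℝ) = 1 + (n:ℝ) := by push_cast; ring
    have h1 : (1:ℝ) + Real.log ((n + 1 : ℕ)) ≤ w n := by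
      simp only [hw]
      have : Real.log ((n + 1 : ℕ)) ≤ Real.log ((d:ℝ) + 2 * n) := by
        apply Real.log_le_log (by positivity)
        push_cast
        linarith
      linarith
    have hb : (0:ℝ) < ((n + 1 : ℕ) : ℝ) * (1 + Real.log ((n + 1 : ℕ))) ^ p := by
      have : (0:ℝ) < ((n+1:ℕ):ℝ) := by positivity
      have h2 : (0:ℝ) < (1 + Real.log ((n + 1 : ℕ))) ^ p := by
        have := log_nat_nonneg (n+1)
        positivity
      positivity
    apply inv_anti₀ hb
    calc ((n + 1 : ℕ) : ℝ) * (1 + Real.log ((n + 1 : ℕ))) ^ p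
        ≤ (1 + (n:ℝ)) * w n ^ p := by
          apply mul_le_mul (le_of_eq hcast) (Real.rpow_le_rpow ?_ h1 hp0) ?_ (by positivity)
          · have := log_nat_nonneg (n+1); linarith
          · have := log_nat_nonneg (n+1); positivity
      _ = w n ^ p * (1 + (n:ℝ)) := mul_comm _ _
  set TA := ∑' n, Af n with hTA
  have hTA0 : 0 ≤ TA :=
    tsum_nonneg (fun n => inv_nonneg.2 (mul_nonneg (hwppos n).le (by positivity)))
  have hlog2 : (0:ℝ) < Real.log 2 := Real.log_pos (by norm_num)
  have hlog2lt : Real.log 2 < 1 := by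
    have := Real.log_two_lt_d9
    linarith
  set c₁ : ℝ := ((1 - Real.log 2) ^ p)⁻¹ with hc₁
  have hc₁pos : 0 < c₁ := by
    have h1 : (0:ℝ) < 1 - Real.log 2 := by linarith
    have : (0:ℝ) < (1 - Real.log 2) ^ p := Real.rpow_pos_of_pos h1 p
    positivity
  refine ⟨TA + 2 * c₁ + 1, by linarith, fun m => ?_⟩
  set g : ℕ → ℝ := fun n => (w n ^ p * (1 + 2 * |(n:ℝ) - (m:ℝ)|))⁻¹ with hg
  have habs : ∀ n : ℕ, (0:ℝ) < 1 + 2 * |(n:ℝ) - (m:ℝ)| := fun n => by positivity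
  have hg0 : ∀ n, 0 ≤ g n := by
    intro n
    have := hwppos n
    have := habs n
    positivity
  set F : ℕ → ℝ := fun n =>
    if 2 * n ≤ m ∨ 2 * m ≤ n then 0 else c₁ * (w m ^ p * (1 + 2 * |(n:ℝ) - (m:ℝ)|))⁻¹ with hF
  have hF0 : ∀ n, 0 ≤ F n := by
    intro n
    simp only [hF]
    split
    · exact le_refl _
    · exact mul_nonneg hc₁pos.le (inv_nonneg.2 (mul_nonneg (hwppos m).le (habs n).le))
  have hgle : ∀ n, g n ≤ Af n + F n := by
    intro n
    by_cases hc : 2 * n ≤ m ∨ 2 * m ≤ n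
    · have h1 : (1:ℝ) + n ≤ 1 + 2 * |(n:ℝ) - (m:ℝ)| := by
        rcases hc with hc | hc
        · have hc' : 2 * (n:ℝ) ≤ m := by exact_mod_cast hc
          have habs' : |(n:ℝ) - (m:ℝ)| = (m:ℝ) - n := by
            rw [abs_sub_comm]
            exact abs_of_nonneg (by linarith)
          rw [habs']
          linarith
        · have hc' : 2 * (m:ℝ) ≤ n := by exact_mod_cast hc
          have hm0 : (0:ℝ) ≤ m := Nat.cast_nonneg m
          have habs' : |(n:ℝ) - (m:ℝ)| = (n:ℝ) - m := abs_of_nonneg (by linarith)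
          rw [habs']
          linarith
      have hgA : g n ≤ Af n := by
        apply inv_anti₀ (mul_pos (hwppos n) (by positivity))
        exact mul_le_mul_of_nonneg_left h1 (hwppos n).le
      have := hF0 n
      linarith
    · push_neg at hc
      obtain ⟨hc1, hc2⟩ := hc
      have hwm : (1 - Real.log 2) * w m ≤ w n := by
        have hhalf : ((d:ℝ) + 2 * m) / 2 ≤ (d:ℝ) + 2 * n := by
          have : (m:ℝ) + 1 ≤ 2 * n := by exact_mod_cast hc1
          linarith
        have hlog : Real.log (((d:ℝ) + 2 * m) / 2) ≤ Real.log ((d:ℝ) + 2 * n) :=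
          Real.log_le_log (by positivity) hhalf
        rw [Real.log_div (ne_of_gt (hjpos m)) (by norm_num)] at hlog
        have hlm0 : 0 ≤ Real.log ((d:ℝ) + 2 * m) := Real.log_nonneg (hj1 m)
        simp only [hw]
        nlinarith
      have hrp : ((1 - Real.log 2) * w m) ^ p ≤ w n ^ p :=
        Real.rpow_le_rpow (by nlinarith [hwpos m]) hwm hp0
      rw [Real.mul_rpow (by linarith) (hwpos m).le] at hrp
      have hFn : F n = c₁ * (w m ^ p * (1 + 2 * |(n:ℝ) - (m:ℝ)|))⁻¹ := by
        simp only [hF]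
        rw [if_neg]
        push_neg
        exact ⟨hc1, hc2⟩
      have hgF : g n ≤ F n := by
        rw [hFn, hc₁, ← mul_inv]
        apply inv_anti₀
        · have := hwppos m
          have := habs n
          have h12 : (0:ℝ) < (1 - Real.log 2) ^ p := Real.rpow_pos_of_pos (by linarith) p
          positivity
        · calc (1 - Real.log 2) ^ p * (w m ^ p * (1 + 2 * |(n:ℝ) - (m:ℝ)|))
              = ((1 - Real.log 2) ^ p * w m ^ p) * (1 + 2 * |(n:ℝ) - (m:ℝ)|) := by ring
            _ ≤ w n ^ p * (1 + 2 * |(n:ℝ) - (m:ℝ)|) :=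
                mul_le_mul_of_nonneg_right hrp (habs n).le
      have hAf0 : 0 ≤ Af n := inv_nonneg.2 (mul_nonneg (hwppos n).le (by positivity))
      linarith
  have hFzero : ∀ n, 2 * m ≤ n → F n = 0 := by
    intro n hn
    simp only [hF]
    rw [if_pos (Or.inr hn)]
  have hFsum : Summable F := by
    apply summable_of_ne_finset_zero (s := Finset.range (2 * m))
    intro n hn
    exact hFzero n (by simpa [Finset.mem_range, not_lt] using hn)
  have hhsum : Summable (fun n => Af n + F n) := hAsum.add hFsum
  have hgsum : Summable g := Summable.of_nonneg_of_le hg0 hgle hhsum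
  refine ⟨hgsum, ?_⟩
  -- bound the middle-region sum
  have hFtsum : ∑' n, F n = ∑ n ∈ Finset.range (2 * m), F n :=
    tsum_eq_sum (fun n hn => hFzero n (by simpa [Finset.mem_range, not_lt] using hn))
  have hwmp := hwppos m
  have hharm : ∑ n ∈ Finset.range (2 * m), ((1:ℝ) + 2 * |(n:ℝ) - (m:ℝ)|)⁻¹
      ≤ 2 * (1 + Real.log m) := by
    have hsplit : ∑ n ∈ Finset.range (2 * m), ((1:ℝ) + 2 * |(n:ℝ) - (m:ℝ)|)⁻¹
        = ∑ n ∈ Finset.range m, ((1:ℝ) + 2 * |(n:ℝ) - (m:ℝ)|)⁻¹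
          + ∑ n ∈ Finset.Ico m (2 * m), ((1:ℝ) + 2 * |(n:ℝ) - (m:ℝ)|)⁻¹ := by
      rw [Finset.range_eq_Ico, ← Finset.sum_Ico_consecutive _ (Nat.zero_le m) (by omega),
        ← Finset.range_eq_Ico]
    have hfirst : ∑ n ∈ Finset.range m, ((1:ℝ) + 2 * |(n:ℝ) - (m:ℝ)|)⁻¹
        ≤ ∑ t ∈ Finset.range m, ((1:ℝ) + t)⁻¹ := by
      rw [← Finset.sum_range_reflect (fun n => ((1:ℝ) + 2 * |(n:ℝ) - (m:ℝ)|)⁻¹) m]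
      apply Finset.sum_le_sum
      intro j hj
      have hjm : j < m := Finset.mem_range.1 hj
      have hcast : ((m - 1 - j : ℕ) : ℝ) = (m:ℝ) - 1 - j := by
        have : m - 1 - j + (j + 1) = m := by omega
        have := congrArg (fun x : ℕ => (x:ℝ)) this
        push_cast at this
        linarith
      have habs' : |((m - 1 - j : ℕ) : ℝ) - (m:ℝ)| = (j:ℝ) + 1 := by
        rw [hcast]
        rw [show (m:ℝ) - 1 - j - m = -((j:ℝ) + 1) by ring, abs_neg]
        exact abs_of_nonneg (by positivity)
      rw [habs']
      apply inv_anti₀ (by positivity)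
      linarith
    have hsecond : ∑ n ∈ Finset.Ico m (2 * m), ((1:ℝ) + 2 * |(n:ℝ) - (m:ℝ)|)⁻¹
        ≤ ∑ t ∈ Finset.range m, ((1:ℝ) + t)⁻¹ := by
      rw [Finset.sum_Ico_eq_sum_range]
      have h2m : 2 * m - m = m := by omega
      rw [h2m]
      apply Finset.sum_le_sum
      intro t _
      have habs' : |((m + t : ℕ) : ℝ) - (m:ℝ)| = (t:ℝ) := by
        push_cast
        rw [show (m:ℝ) + t - m = (t:ℝ) by ring]
        exact abs_of_nonneg (Nat.cast_nonneg t)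
      rw [habs']
      apply inv_anti₀ (by positivity)
      linarith [(Nat.cast_nonneg t : (0:ℝ) ≤ t)]
    calc ∑ n ∈ Finset.range (2 * m), ((1:ℝ) + 2 * |(n:ℝ) - (m:ℝ)|)⁻¹
        ≤ ∑ t ∈ Finset.range m, ((1:ℝ) + t)⁻¹ + ∑ t ∈ Finset.range m, ((1:ℝ) + t)⁻¹ := by
          rw [hsplit]; exact add_le_add hfirst hsecond
      _ = 2 * ∑ t ∈ Finset.range m, ((1:ℝ) + t)⁻¹ := by ring
      _ ≤ 2 * (1 + Real.log m) := by
          have := harm_le m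
          linarith
  have hlogm : Real.log m ≤ Real.log ((d:ℝ) + 2 * m) := by
    rcases Nat.eq_zero_or_pos m with hm | hm
    · subst hm
      simp only [Nat.cast_zero, Real.log_zero]
      have := hj1 0
      apply Real.log_nonneg
      push_cast at this ⊢
      linarith
    · apply Real.log_le_log (by exact_mod_cast hm)
      push_cast
      linarith [hd']
  have hFbound : ∑' n, F n ≤ 2 * c₁ := by
    rw [hFtsum]
    have hFle : ∀ n ∈ Finset.range (2 * m),
        F n ≤ c₁ * (w m ^ p)⁻¹ * ((1:ℝ) + 2 * |(n:ℝ) - (m:ℝ)|)⁻¹ := by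
      intro n _
      simp only [hF]
      split
      · positivity
      · rw [mul_inv, mul_assoc]
    calc ∑ n ∈ Finset.range (2 * m), F n
        ≤ ∑ n ∈ Finset.range (2 * m), c₁ * (w m ^ p)⁻¹ * ((1:ℝ) + 2 * |(n:ℝ) - (m:ℝ)|)⁻¹ :=
          Finset.sum_le_sum hFle
      _ = c₁ * (w m ^ p)⁻¹ * ∑ n ∈ Finset.range (2 * m), ((1:ℝ) + 2 * |(n:ℝ) - (m:ℝ)|)⁻¹ := by
          rw [Finset.mul_sum]
      _ ≤ c₁ * (w m ^ p)⁻¹ * (2 * (1 + Real.log m)) := by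
          apply mul_le_mul_of_nonneg_left hharm (by positivity)
      _ ≤ c₁ * (w m ^ p)⁻¹ * (2 * w m) := by
          apply mul_le_mul_of_nonneg_left ?_ (by positivity)
          simp only [hw]
          linarith
      _ = 2 * c₁ * ((w m ^ p)⁻¹ * w m) := by ring
      _ ≤ 2 * c₁ * 1 := by
          apply mul_le_mul_of_nonneg_left ?_ (by positivity)
          have hle : w m ≤ w m ^ p := by
            calc w m = w m ^ (1:ℝ) := (Real.rpow_one _).symm
              _ ≤ w m ^ p := Real.rpow_le_rpow_of_exponent_le (hw1 m) (by linarith)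
          calc (w m ^ p)⁻¹ * w m ≤ (w m ^ p)⁻¹ * w m ^ p :=
                mul_le_mul_of_nonneg_left hle (by positivity)
            _ = 1 := inv_mul_cancel₀ (ne_of_gt hwmp)
      _ = 2 * c₁ := mul_one _
  calc tsum g ≤ ∑' n, (Af n + F n) := Summable.tsum_le_tsum hgle hgsum hhsum
    _ = TA + ∑' n, F n := by rw [Summable.tsum_add hAsum hFsum, hTA]
    _ ≤ TA + 2 * c₁ := by linarith
    _ ≤ TA + 2 * c₁ + 1 := by linarith

/-! ### Norm of a block of the product matrix -/

lemma blockNorm_prod_le (d : ℕ) (A B : IndexE d → IndexE d → ℂ) (k k' : ℕ) (u : ℕ → ℝ)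
    (hsum : ∀ a c : IndexE d, Summable fun b : IndexE d => ‖A a b * B b c‖)
    (hu : ∀ n, blockNorm d A k n * blockNorm d B n k' ≤ u n)
    (hus : Summable u) :
    blockNorm d (fun a c => ∑' b : IndexE d, A a b * B b c) k k' ≤ ∑' n, u n := by
  have hu0 : ∀ n, 0 ≤ u n := fun n =>
    le_trans (mul_nonneg (blockNorm_nonneg _ _ _ _) (blockNorm_nonneg _ _ _ _)) (hu n)
  rw [blockNorm_eq]
  apply ContinuousLinearMap.opNorm_le_bound _ (tsum_nonneg hu0)
  intro x
  set g : ℕ → EuclideanSpace ℂ (Fin (hermiteDim d (d + 2 * k))) :=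
    fun n => blkT d A k n (blkT d B n k' x) with hgdef
  have hgn : ∀ n, ‖g n‖ ≤ u n * ‖x‖ := by
    intro n
    calc ‖g n‖ ≤ ‖blkT d A k n‖ * ‖blkT d B n k' x‖ := ContinuousLinearMap.le_opNorm _ _
      _ ≤ ‖blkT d A k n‖ * (‖blkT d B n k'‖ * ‖x‖) :=
          mul_le_mul_of_nonneg_left (ContinuousLinearMap.le_opNorm _ _) (norm_nonneg _)
      _ = blockNorm d A k n * blockNorm d B n k' * ‖x‖ := by
          rw [blockNorm_eq, blockNorm_eq]; ring
      _ ≤ u n * ‖x‖ := mul_le_mul_of_nonneg_right (hu n) (norm_nonneg _)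
  have hgnorm_sum : Summable fun n => ‖g n‖ :=
    Summable.of_nonneg_of_le (fun n => norm_nonneg _) hgn (hus.mul_right ‖x‖)
  have hsg : Summable g := Summable.of_norm hgnorm_sum
  have key : blkT d (fun a c => ∑' b : IndexE d, A a b * B b c) k k' x = ∑' n, g n := by
    have hcoord : ∀ i : Fin (hermiteDim d (d + 2 * k)),
        blkT d (fun a c => ∑' b : IndexE d, A a b * B b c) k k' x i = ∑' n, g n i := by
      intro i
      rw [blkT_apply]
      -- summability of norms over fibers
      have hwsum : ∀ i' : Fin (hermiteDim d (d + 2 * k')), Summable fun n : ℕ =>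
          ∑ i'', ‖A ⟨k, i⟩ ⟨n, i''⟩ * B ⟨n, i''⟩ ⟨k', i'⟩‖ := by
        intro i'
        have h1 := (summable_sigma_of_nonneg
          (f := fun b : IndexE d => ‖A ⟨k, i⟩ b * B b ⟨k', i'⟩‖)
          (fun _ => norm_nonneg _)).1 (hsum ⟨k, i⟩ ⟨k', i'⟩)
        apply h1.2.congr
        intro n
        exact tsum_fintype _
      have hzsum : ∀ i' : Fin (hermiteDim d (d + 2 * k')), Summable fun n : ℕ =>
          ∑ i'', A ⟨k, i⟩ ⟨n, i''⟩ * B ⟨n, i''⟩ ⟨k', i'⟩ := by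
        intro i'
        apply Summable.of_norm
        apply Summable.of_nonneg_of_le (fun n => norm_nonneg _) (fun n => norm_sum_le _ _)
          (hwsum i')
      have hstep1 : ∀ i' : Fin (hermiteDim d (d + 2 * k')),
          (∑' b : IndexE d, A ⟨k, i⟩ b * B b ⟨k', i'⟩)
            = ∑' n : ℕ, ∑ i'', A ⟨k, i⟩ ⟨n, i''⟩ * B ⟨n, i''⟩ ⟨k', i'⟩ := by
        intro i'
        rw [Summable.tsum_sigma (Summable.of_norm (hsum ⟨k, i⟩ ⟨k', i'⟩))]
        exact tsum_congr fun n => tsum_fintype _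
      calc ∑ i', (∑' b : IndexE d, A ⟨k, i⟩ b * B b ⟨k', i'⟩) * x i'
          = ∑ i', ∑' n : ℕ, (∑ i'', A ⟨k, i⟩ ⟨n, i''⟩ * B ⟨n, i''⟩ ⟨k', i'⟩) * x i' := by
            refine Finset.sum_congr rfl fun i' _ => ?_
            rw [hstep1 i', tsum_mul_right]
        _ = ∑' n : ℕ, ∑ i', (∑ i'', A ⟨k, i⟩ ⟨n, i''⟩ * B ⟨n, i''⟩ ⟨k', i'⟩) * x i' :=
            (Summable.tsum_finsetSum (fun i' _ => (hzsum i').mul_right (x i'))).symm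
        _ = ∑' n, g n i := by
            refine tsum_congr fun n => ?_
            have : g n i = ∑ i'', A ⟨k, i⟩ ⟨n, i''⟩ * blkT d B n k' x i'' := blkT_apply _ _ _ _ _ _
            rw [this]
            have : ∀ i'', A ⟨k, i⟩ ⟨n, i''⟩ * blkT d B n k' x i''
                = ∑ i', A ⟨k, i⟩ ⟨n, i''⟩ * (B ⟨n, i''⟩ ⟨k', i'⟩ * x i') := by
              intro i''
              rw [blkT_apply, Finset.mul_sum]
            rw [Finset.sum_congr rfl fun i'' _ => this i'', Finset.sum_comm]
            refine Finset.sum_congr rfl fun i' _ => ?_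
            rw [Finset.sum_mul]
            exact Finset.sum_congr rfl fun i'' _ => by ring
    have hproj : ∀ i : Fin (hermiteDim d (d + 2 * k)), (∑' n, g n) i = ∑' n, g n i := by
      intro i
      have := hsg.hasSum.mapL (EuclideanSpace.proj (𝕜 := ℂ) i)
      exact (this.tsum_eq).symm
    ext i
    rw [hcoord i, hproj i]
  rw [key]
  calc ‖∑' n, g n‖ ≤ ∑' n, ‖g n‖ := norm_tsum_le_tsum_norm hgnorm_sum
    _ ≤ ∑' n, u n * ‖x‖ := Summable.tsum_le_tsum hgn hgnorm_sum (hus.mul_right _)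
    _ = (∑' n, u n) * ‖x‖ := tsum_mul_right

theorem stmt5 (d : ℕ) (hd : 1 ≤ d) (β : ℝ) (hβ : 1 / 2 < β) :
    ∃ C > 0, ∀ (A B : IndexE d → IndexE d → ℂ) (MA MB : ℝ),
      (∀ k k', wtBeta d β k k' * blockNorm d A k k' ≤ MA) →
      (∀ k k', wtBetaPlus d β k k' * blockNorm d B k k' ≤ MB) →
      (∀ a c : IndexE d, Summable (fun b : IndexE d => ‖A a b * B b c‖)) ∧
      (∀ a c : IndexE d, Summable (fun b : IndexE d => ‖B a b * A b c‖)) ∧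
      (∀ k k', wtBeta d β k k' *
        blockNorm d (fun a c => ∑' b : IndexE d, A a b * B b c) k k' ≤ C * MA * MB) ∧
      (∀ k k', wtBeta d β k k' *
        blockNorm d (fun a c => ∑' b : IndexE d, B a b * A b c) k k' ≤ C * MA * MB) := by
  have hp : (1:ℝ) < β + β := by linarith
  have hβ0 : 0 ≤ β := by linarith
  obtain ⟨Cs, hCspos, hkey⟩ := keySum d hd hp
  refine ⟨Cs, hCspos, ?_⟩
  intro A B MA MB hA hB
  have hd' : (1:ℝ) ≤ d := by exact_mod_cast hd
  have hj1 : ∀ n : ℕ, (1:ℝ) ≤ (d:ℝ) + 2 * n := by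
    intro n
    have : (0:ℝ) ≤ 2 * n := by positivity
    linarith
  set w : ℕ → ℝ := fun n => 1 + Real.log ((d:ℝ) + 2 * n) with hw
  have hw1 : ∀ n, 1 ≤ w n := by
    intro n
    have := Real.log_nonneg (hj1 n)
    simp only [hw]
    linarith
  have hwpos : ∀ n, 0 < w n := fun n => lt_of_lt_of_le one_pos (hw1 n)
  have hwb1 : ∀ n, 1 ≤ w n ^ β := by
    intro n
    calc (1:ℝ) = 1 ^ β := (Real.one_rpow β).symm
      _ ≤ w n ^ β := Real.rpow_le_rpow zero_le_one (hw1 n) hβ0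
  have hwbpos : ∀ n, 0 < w n ^ β := fun n => lt_of_lt_of_le one_pos (hwb1 n)
  have hwt1 : ∀ k k', 1 ≤ wtBeta d β k k' := by
    intro k k'
    have := hwb1 k
    have := hwb1 k'
    calc (1:ℝ) = 1 * 1 := (one_mul 1).symm
      _ ≤ wtBeta d β k k' := mul_le_mul (hwb1 k) (hwb1 k') zero_le_one (by linarith)
  have hwtpos : ∀ k k', 0 < wtBeta d β k k' := fun k k' =>
    lt_of_lt_of_le one_pos (hwt1 k k')
  have hwtp_pos : ∀ k k', 0 < wtBetaPlus d β k k' := by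
    intro k k'
    have h1 : (0:ℝ) < 1 + |((d:ℝ) + 2 * k) - ((d:ℝ) + 2 * k')| := by positivity
    exact mul_pos h1 (hwtpos k k')
  have hMA0 : 0 ≤ MA :=
    le_trans (mul_nonneg (hwtpos 0 0).le (blockNorm_nonneg _ _ _ _)) (hA 0 0)
  have hMB0 : 0 ≤ MB :=
    le_trans (mul_nonneg (hwtp_pos 0 0).le (blockNorm_nonneg _ _ _ _)) (hB 0 0)
  have habs2 : ∀ n m : ℕ, |((d:ℝ) + 2 * n) - ((d:ℝ) + 2 * m)| = 2 * |(n:ℝ) - (m:ℝ)| := by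
    intro n m
    rw [show ((d:ℝ) + 2 * n) - ((d:ℝ) + 2 * m) = 2 * ((n:ℝ) - m) by ring, abs_mul, abs_two]
  -- the summable majorant
  set G : ℕ → ℕ → ℝ := fun m n =>
    ((1 + Real.log ((d:ℝ) + 2 * n)) ^ (β + β) * (1 + 2 * |(n:ℝ) - (m:ℝ)|))⁻¹ with hG
  have hGsum : ∀ m, Summable (G m) := fun m => (hkey m).1
  have hGle : ∀ m, ∑' n, G m n ≤ Cs := fun m => (hkey m).2
  have hG0 : ∀ m n, 0 ≤ G m n := by
    intro m n
    have h1 : (0:ℝ) < (1 + Real.log ((d:ℝ) + 2 * n)) ^ (β + β) :=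
      Real.rpow_pos_of_pos (hwpos n) _
    have h2 : (0:ℝ) < 1 + 2 * |(n:ℝ) - (m:ℝ)| := by positivity
    simp only [hG]
    positivity
  -- block norm bounds from hypotheses
  have hbnA : ∀ k k', blockNorm d A k k' ≤ MA / wtBeta d β k k' := by
    intro k k'
    rw [le_div_iff₀ (hwtpos k k')]
    rw [mul_comm]
    exact hA k k'
  have hbnB : ∀ k k', blockNorm d B k k' ≤ MB / wtBetaPlus d β k k' := by
    intro k k'
    rw [le_div_iff₀ (hwtp_pos k k')]
    rw [mul_comm]
    exact hB k k'
  -- key algebraic identities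
  have id1 : ∀ k n k' : ℕ, wtBeta d β k n * wtBetaPlus d β n k'
      = wtBeta d β k k' * ((1 + Real.log ((d:ℝ) + 2 * n)) ^ (β + β)
          * (1 + 2 * |(n:ℝ) - (k':ℝ)|)) := by
    intro k n k'
    simp only [wtBeta, wtBetaPlus]
    rw [habs2 n k', Real.rpow_add (hwpos n)]
    ring
  have id2 : ∀ k n k' : ℕ, wtBetaPlus d β k n * wtBeta d β n k'
      = wtBeta d β k k' * ((1 + Real.log ((d:ℝ) + 2 * n)) ^ (β + β)
          * (1 + 2 * |(n:ℝ) - (k:ℝ)|)) := by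
    intro k n k'
    simp only [wtBeta, wtBetaPlus]
    rw [habs2 k n, abs_sub_comm (k:ℝ) (n:ℝ), Real.rpow_add (hwpos n)]
    ring
  have hprod1 : ∀ k n k', blockNorm d A k n * blockNorm d B n k'
      ≤ MA * MB * (wtBeta d β k k')⁻¹ * G k' n := by
    intro k n k'
    calc blockNorm d A k n * blockNorm d B n k'
        ≤ (MA / wtBeta d β k n) * (MB / wtBetaPlus d β n k') :=
          mul_le_mul (hbnA k n) (hbnB n k') (blockNorm_nonneg _ _ _ _)
            (div_nonneg hMA0 (hwtpos k n).le)
      _ = MA * MB / (wtBeta d β k n * wtBetaPlus d β n k') := div_mul_div_comm _ _ _ _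
      _ = MA * MB * (wtBeta d β k k')⁻¹ * G k' n := by
          rw [div_eq_mul_inv, id1 k n k', mul_inv, ← mul_assoc]
  have hprod2 : ∀ k n k', blockNorm d B k n * blockNorm d A n k'
      ≤ MA * MB * (wtBeta d β k k')⁻¹ * G k n := by
    intro k n k'
    calc blockNorm d B k n * blockNorm d A n k'
        ≤ (MB / wtBetaPlus d β k n) * (MA / wtBeta d β n k') :=
          mul_le_mul (hbnB k n) (hbnA n k') (blockNorm_nonneg _ _ _ _)
            (div_nonneg hMB0 (hwtp_pos k n).le)
      _ = MA * MB / (wtBetaPlus d β k n * wtBeta d β n k') := by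
          rw [div_mul_div_comm]
          ring_nf
      _ = MA * MB * (wtBeta d β k k')⁻¹ * G k n := by
          rw [div_eq_mul_inv, id2 k n k', mul_inv, ← mul_assoc]
  -- summability of fiberwise norm sums
  have hsum1 : ∀ a c : IndexE d, Summable fun b : IndexE d => ‖A a b * B b c‖ := by
    rintro ⟨k, i⟩ ⟨k', i'⟩
    rw [summable_sigma_of_nonneg (fun _ => norm_nonneg _)]
    refine ⟨fun n => (hasSum_fintype _).summable, ?_⟩
    apply Summable.of_nonneg_of_le
      (fun n => tsum_nonneg fun i'' => norm_nonneg _)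
      (fun n => ?_)
      ((hGsum k').mul_left (MA * MB * (wtBeta d β k k')⁻¹))
    rw [tsum_fintype]
    calc ∑ i'', ‖A ⟨k, i⟩ ⟨n, i''⟩ * B ⟨n, i''⟩ ⟨k', i'⟩‖
        ≤ blockNorm d A k n * blockNorm d B n k' := fiber_bound d A B k n k' i i'
      _ ≤ MA * MB * (wtBeta d β k k')⁻¹ * G k' n := hprod1 k n k'
  have hsum2 : ∀ a c : IndexE d, Summable fun b : IndexE d => ‖B a b * A b c‖ := by
    rintro ⟨k, i⟩ ⟨k', i'⟩
    rw [summable_sigma_of_nonneg (fun _ => norm_nonneg _)]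
    refine ⟨fun n => (hasSum_fintype _).summable, ?_⟩
    apply Summable.of_nonneg_of_le
      (fun n => tsum_nonneg fun i'' => norm_nonneg _)
      (fun n => ?_)
      ((hGsum k).mul_left (MA * MB * (wtBeta d β k k')⁻¹))
    rw [tsum_fintype]
    calc ∑ i'', ‖B ⟨k, i⟩ ⟨n, i''⟩ * A ⟨n, i''⟩ ⟨k', i'⟩‖
        ≤ blockNorm d B k n * blockNorm d A n k' := fiber_bound d B A k n k' i i'
      _ ≤ MA * MB * (wtBeta d β k k')⁻¹ * G k n := hprod2 k n k'
  refine ⟨hsum1, hsum2, ?_, ?_⟩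
  · intro k k'
    have hbound := blockNorm_prod_le d A B k k'
      (fun n => MA * MB * (wtBeta d β k k')⁻¹ * G k' n) hsum1 (hprod1 k · k')
      ((hGsum k').mul_left _)
    have htsum : ∑' n, MA * MB * (wtBeta d β k k')⁻¹ * G k' n
        ≤ MA * MB * (wtBeta d β k k')⁻¹ * Cs := by
      rw [tsum_mul_left]
      exact mul_le_mul_of_nonneg_left (hGle k')
        (mul_nonneg (mul_nonneg hMA0 hMB0) (inv_nonneg.2 (hwtpos k k').le))
    have h2 : blockNorm d (fun a c => ∑' b : IndexE d, A a b * B b c) k k'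
        ≤ MA * MB * (wtBeta d β k k')⁻¹ * Cs := le_trans hbound htsum
    calc wtBeta d β k k' * blockNorm d (fun a c => ∑' b : IndexE d, A a b * B b c) k k'
        ≤ wtBeta d β k k' * (MA * MB * (wtBeta d β k k')⁻¹ * Cs) :=
          mul_le_mul_of_nonneg_left h2 (hwtpos k k').le
      _ = (wtBeta d β k k' * (wtBeta d β k k')⁻¹) * (MA * MB * Cs) := by ring
      _ = Cs * MA * MB := by
          rw [mul_inv_cancel₀ (ne_of_gt (hwtpos k k')), one_mul]
          ring
  · intro k k'
    have hbound := blockNorm_prod_le d B A k k'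
      (fun n => MA * MB * (wtBeta d β k k')⁻¹ * G k n) hsum2 (hprod2 k · k')
      ((hGsum k).mul_left _)
    have htsum : ∑' n, MA * MB * (wtBeta d β k k')⁻¹ * G k n
        ≤ MA * MB * (wtBeta d β k k')⁻¹ * Cs := by
      rw [tsum_mul_left]
      exact mul_le_mul_of_nonneg_left (hGle k)
        (mul_nonneg (mul_nonneg hMA0 hMB0) (inv_nonneg.2 (hwtpos k k').le))
    have h2 : blockNorm d (fun a c => ∑' b : IndexE d, B a b * A b c) k k'
        ≤ MA * MB * (wtBeta d β k k')⁻¹ * Cs := le_trans hbound htsum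
    calc wtBeta d β k k' * blockNorm d (fun a c => ∑' b : IndexE d, B a b * A b c) k k'
        ≤ wtBeta d β k k' * (MA * MB * (wtBeta d β k k')⁻¹ * Cs) :=
          mul_le_mul_of_nonneg_left h2 (hwtpos k k').le
      _ = (wtBeta d β k k' * (wtBeta d β k k')⁻¹) * (MA * MB * Cs) := by ring
      _ = Cs * MA * MB := by
          rw [mul_inv_cancel₀ (ne_of_gt (hwtpos k k')), one_mul]
          ring
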